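/- Define N, D, g : ℝ → ℝ by N(t) = 4*Real.cos (6*t) − 6*Real.cos (5*t) + 2*Real.cos (4*t) + 4*Real.cos (3*t) − 6*Real.cos (2*t) + 2*Real.cos t + 1, D(t) = 2*Real.cos (6*t) − 2*Real.cos (5*t) + 2*Real.cos (3*t) − 2*Real.cos (2*t) + 1, and g(t) = N(t)/D(t). Then there exists ε > 0 such that D(t) ≠ 0 for all t ∈ Set.Icc (π − ε) π, g is continuous on Set.Icc (π − ε) π, and g is strictly monotonically increasing on Set.Icc (π − ε) π. -/

import Mathlib

/-- The numerator `N(t)` of the ratio `g(t) = Δ_{K₁}(e^{it/2})/Δ_{K₀}(e^{it/2})`. -/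
noncomputable def Nfun (t : ℝ) : ℝ :=
  4 * Real.cos (6 * t) - 6 * Real.cos (5 * t) + 2 * Real.cos (4 * t)
    + 4 * Real.cos (3 * t) - 6 * Real.cos (2 * t) + 2 * Real.cos t + 1

/-- The denominator `D(t)`. -/
noncomputable def Dfun (t : ℝ) : ℝ :=
  2 * Real.cos (6 * t) - 2 * Real.cos (5 * t) + 2 * Real.cos (3 * t)
    - 2 * Real.cos (2 * t) + 1

/-- The ratio `g(t) = N(t)/D(t)`. -/
noncomputable def gfun (t : ℝ) : ℝ := Nfun t / Dfun t

noncomputable def Nder (t : ℝ) : ℝ :=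
  -24 * Real.sin (6 * t) + 30 * Real.sin (5 * t) - 8 * Real.sin (4 * t)
    - 12 * Real.sin (3 * t) + 12 * Real.sin (2 * t) - 2 * Real.sin t

noncomputable def Dder (t : ℝ) : ℝ :=
  -12 * Real.sin (6 * t) + 10 * Real.sin (5 * t) - 6 * Real.sin (3 * t)
    + 4 * Real.sin (2 * t)

noncomputable def Nder2 (t : ℝ) : ℝ :=
  -144 * Real.cos (6 * t) + 150 * Real.cos (5 * t) - 32 * Real.cos (4 * t)
    - 36 * Real.cos (3 * t) + 24 * Real.cos (2 * t) - 2 * Real.cos t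

noncomputable def Dder2 (t : ℝ) : ℝ :=
  -72 * Real.cos (6 * t) + 50 * Real.cos (5 * t) - 18 * Real.cos (3 * t)
    + 8 * Real.cos (2 * t)

noncomputable def Hfun (t : ℝ) : ℝ := Nder t * Dfun t - Nfun t * Dder t

lemma hasDerivAt_cos_mul (a t : ℝ) :
    HasDerivAt (fun s => Real.cos (a * s)) (-Real.sin (a * t) * a) t := by
  simpa [Function.comp_def] using (Real.hasDerivAt_cos (a * t)).comp t ((hasDerivAt_id t).const_mul a)

lemma hasDerivAt_sin_mul (a t : ℝ) :
    HasDerivAt (fun s => Real.sin (a * s)) (Real.cos (a * t) * a) t := by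
  simpa [Function.comp_def] using (Real.hasDerivAt_sin (a * t)).comp t ((hasDerivAt_id t).const_mul a)

lemma hasDerivAt_N (t : ℝ) : HasDerivAt Nfun (Nder t) t := by
  have h := ((((((((hasDerivAt_cos_mul 6 t).const_mul 4).sub
      ((hasDerivAt_cos_mul 5 t).const_mul 6)).add
      ((hasDerivAt_cos_mul 4 t).const_mul 2)).add
      ((hasDerivAt_cos_mul 3 t).const_mul 4)).sub
      ((hasDerivAt_cos_mul 2 t).const_mul 6)).add
      ((Real.hasDerivAt_cos t).const_mul 2)).add_const 1)
  refine HasDerivAt.congr_deriv h ?_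
  simp [Nder]; ring

lemma hasDerivAt_D (t : ℝ) : HasDerivAt Dfun (Dder t) t := by
  have h := ((((((hasDerivAt_cos_mul 6 t).const_mul 2).sub
      ((hasDerivAt_cos_mul 5 t).const_mul 2)).add
      ((hasDerivAt_cos_mul 3 t).const_mul 2)).sub
      ((hasDerivAt_cos_mul 2 t).const_mul 2)).add_const 1)
  refine HasDerivAt.congr_deriv h ?_
  simp [Dder]; ring

lemma hasDerivAt_Nder (t : ℝ) : HasDerivAt Nder (Nder2 t) t := by
  have h := (((((((hasDerivAt_sin_mul 6 t).const_mul (-24)).add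
      ((hasDerivAt_sin_mul 5 t).const_mul 30)).sub
      ((hasDerivAt_sin_mul 4 t).const_mul 8)).sub
      ((hasDerivAt_sin_mul 3 t).const_mul 12)).add
      ((hasDerivAt_sin_mul 2 t).const_mul 12)).sub
      ((Real.hasDerivAt_sin t).const_mul 2))
  refine HasDerivAt.congr_deriv h ?_
  simp [Nder2]; ring

lemma hasDerivAt_Dder (t : ℝ) : HasDerivAt Dder (Dder2 t) t := by
  have h := (((((hasDerivAt_sin_mul 6 t).const_mul (-12)).add
      ((hasDerivAt_sin_mul 5 t).const_mul 10)).sub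
      ((hasDerivAt_sin_mul 3 t).const_mul 6)).add
      ((hasDerivAt_sin_mul 2 t).const_mul 4))
  refine HasDerivAt.congr_deriv h ?_
  simp [Dder2]; ring

lemma sin_mul_pi (n : ℤ) : Real.sin ((n : ℝ) * Real.pi) = 0 := Real.sin_int_mul_pi n

open Real in
lemma cos_vals :
    Real.cos (2 * π) = 1 ∧ Real.cos (3 * π) = -1 ∧ Real.cos (4 * π) = 1 ∧
      Real.cos (5 * π) = -1 ∧ Real.cos (6 * π) = 1 := by
  have c2 : Real.cos (2 * π) = 1 := Real.cos_two_pi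
  have c3 : Real.cos (3 * π) = -1 := by
    rw [show (3:ℝ) * π = 2 * π + π by ring, Real.cos_add, c2, Real.sin_two_pi]
    simp
  have c4 : Real.cos (4 * π) = 1 := by
    rw [show (4:ℝ) * π = 2 * π + 2 * π by ring, Real.cos_add, c2, Real.sin_two_pi]
    simp
  have c5 : Real.cos (5 * π) = -1 := by
    rw [show (5:ℝ) * π = 2 * π + 3 * π by ring, Real.cos_add, c2, Real.sin_two_pi, c3]
    simp
  have c6 : Real.cos (6 * π) = 1 := by
    rw [show (6:ℝ) * π = 2 * π + 4 * π by ring, Real.cos_add, c2, Real.sin_two_pi, c4]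
    simp
  exact ⟨c2, c3, c4, c5, c6⟩

open Real in
lemma sin_vals :
    Real.sin (2 * π) = 0 ∧ Real.sin (3 * π) = 0 ∧ Real.sin (4 * π) = 0 ∧
      Real.sin (5 * π) = 0 ∧ Real.sin (6 * π) = 0 := by
  have s2 : Real.sin (2 * π) = 0 := Real.sin_two_pi
  have s3 : Real.sin (3 * π) = 0 := by
    rw [show (3:ℝ) * π = 2 * π + π by ring, Real.sin_add, s2, Real.cos_two_pi]
    simp
  have s4 : Real.sin (4 * π) = 0 := by
    rw [show (4:ℝ) * π = 2 * π + 2 * π by ring, Real.sin_add, s2, Real.cos_two_pi]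
    simp
  have s5 : Real.sin (5 * π) = 0 := by
    rw [show (5:ℝ) * π = 2 * π + 3 * π by ring, Real.sin_add, s2, s3, Real.cos_two_pi]
    simp
  have s6 : Real.sin (6 * π) = 0 := by
    rw [show (6:ℝ) * π = 2 * π + 4 * π by ring, Real.sin_add, s2, s4, Real.cos_two_pi]
    simp
  exact ⟨s2, s3, s4, s5, s6⟩

open Real in
lemma Dfun_pi : Dfun π = 1 := by
  obtain ⟨c2, c3, c4, c5, c6⟩ := cos_vals
  simp [Dfun, c2, c3, c5, c6]

open Real in
lemma Nfun_pi : Nfun π = 1 := by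
  obtain ⟨c2, c3, c4, c5, c6⟩ := cos_vals
  simp [Nfun, c2, c3, c4, c5, c6, Real.cos_pi]
  ring

open Real in
lemma Hfun_pi : Hfun π = 0 := by
  obtain ⟨s2, s3, s4, s5, s6⟩ := sin_vals
  simp [Hfun, Nder, Dder, s2, s3, s4, s5, s6, Real.sin_pi]

open Real in
lemma hasDerivAt_H_pi : HasDerivAt Hfun (-168) π := by
  have h := ((hasDerivAt_Nder π).mul (hasDerivAt_D π)).sub
      ((hasDerivAt_N π).mul (hasDerivAt_Dder π))
  have hval : Nder2 π * Dfun π + Nder π * Dder π -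
      (Nder π * Dder π + Nfun π * Dder2 π) = -168 := by
    obtain ⟨c2, c3, c4, c5, c6⟩ := cos_vals
    obtain ⟨s2, s3, s4, s5, s6⟩ := sin_vals
    rw [Dfun_pi, Nfun_pi]
    simp [Nder2, Dder2, Nder, Dder, c2, c3, c4, c5, c6, s2, s3, s4, s5, s6,
      Real.cos_pi, Real.sin_pi]
    ring
  rw [← hval]
  exact h

open Real Filter Set Topology in
lemma H_pos : ∃ l, l < π ∧ ∀ t ∈ Set.Ioo l π, 0 < Hfun t := by
  have hs : Tendsto (slope Hfun π) (𝓝[≠] π) (𝓝 (-168)) :=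
    hasDerivAt_iff_tendsto_slope.mp hasDerivAt_H_pi
  have h1 : ∀ᶠ t in 𝓝[≠] π, slope Hfun π t < 0 :=
    hs.eventually_lt_const (by norm_num)
  have h2 : ∀ᶠ t in 𝓝[<] π, slope Hfun π t < 0 :=
    h1.filter_mono (nhdsWithin_mono π fun x hx => ne_of_lt hx)
  obtain ⟨l, hl, hsub⟩ := mem_nhdsLT_iff_exists_Ioo_subset.mp h2
  refine ⟨l, hl, fun t ht => ?_⟩
  have hslope := hsub ht
  simp only [Set.mem_setOf_eq, slope_def_field, Hfun_pi, sub_zero] at hslope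
  have hlt : t - π < 0 := sub_neg.mpr ht.2
  rcases div_neg_iff.mp hslope with ⟨h, _⟩ | ⟨_, h'⟩
  · exact h
  · linarith

lemma continuous_N : Continuous Nfun := by unfold Nfun; fun_prop

lemma continuous_D : Continuous Dfun := by unfold Dfun; fun_prop

open Real Filter Topology in
lemma D_pos : ∃ δ > 0, ∀ t : ℝ, |t - π| < δ → 0 < Dfun t := by
  have hc : ContinuousAt Dfun π := continuous_D.continuousAt
  have hT : Tendsto Dfun (𝓝 π) (𝓝 1) := by rw [← Dfun_pi]; exact hc
  have h : ∀ᶠ t in 𝓝 π, 0 < Dfun t := hT.eventually_const_lt (by norm_num)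
  rw [Metric.eventually_nhds_iff] at h
  obtain ⟨δ, hδ, hball⟩ := h
  exact ⟨δ, hδ, fun t ht => hball (by rwa [Real.dist_eq])⟩

open Real Set in
/-- On some interval `[π - ε, π]` the denominator `D` is nonvanishing and `g` is
continuous and strictly increasing. -/
theorem stmt14 :
    ∃ ε : ℝ, 0 < ε ∧
      (∀ t ∈ Set.Icc (Real.pi - ε) Real.pi, Dfun t ≠ 0) ∧
      ContinuousOn gfun (Set.Icc (Real.pi - ε) Real.pi) ∧
      StrictMonoOn gfun (Set.Icc (Real.pi - ε) Real.pi) := by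
  obtain ⟨l, hl, hH⟩ := H_pos
  obtain ⟨δ, hδ, hD⟩ := D_pos
  set ε := min ((π - l) / 2) (δ / 2) with hε
  have hεpos : 0 < ε := lt_min (by linarith) (by linarith)
  have hεδ : ε < δ := lt_of_le_of_lt (min_le_right _ _) (by linarith)
  have hεl : l < π - ε := by
    have : ε ≤ (π - l) / 2 := min_le_left _ _
    linarith
  have hDpos : ∀ t ∈ Icc (π - ε) π, 0 < Dfun t := by
    intro t ht
    apply hD
    rw [abs_lt]
    exact ⟨by linarith [ht.1], by linarith [ht.2]⟩
  have hDne : ∀ t ∈ Icc (π - ε) π, Dfun t ≠ 0 := fun t ht => (hDpos t ht).ne'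
  have hcont : ContinuousOn gfun (Icc (π - ε) π) :=
    (continuous_N.continuousOn).div (continuous_D.continuousOn) hDne
  refine ⟨ε, hεpos, hDne, hcont, ?_⟩
  apply strictMonoOn_of_deriv_pos (convex_Icc _ _) hcont
  intro x hx
  rw [interior_Icc] at hx
  have hxIcc : x ∈ Icc (π - ε) π := Ioo_subset_Icc_self hx
  have hne : Dfun x ≠ 0 := hDne x hxIcc
  have hg : HasDerivAt gfun ((Nder x * Dfun x - Nfun x * Dder x) / Dfun x ^ 2) x :=
    (hasDerivAt_N x).div (hasDerivAt_D x) hne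
  rw [hg.deriv]
  have hHx : 0 < Hfun x := hH x ⟨by linarith [hx.1], hx.2⟩
  exact div_pos hHx (by positivity)
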